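/- Let S be an uncountable set of countable limit ordinals carrying a ladder system ⟨x_α : α ∈ S⟩, and let B = (S, <_lex) be the associated Baumgartner type. Then every uncountable subset T ⊆ S contains a copy of ω₁ in the induced order: there is an order embedding of (ω₁, <) into (T, <_lex). -/

import Mathlib

/-- The first uncountable ordinal, `ω₁`. -/
noncomputable def ω1 : Ordinal := (Cardinal.aleph 1).ord

/-- `x` is a ladder system on the set `S` of countable limit ordinals: each `α ∈ S` is a
countable limit ordinal and `x α : ℕ → Ordinal` is strictly increasing with range contained
and cofinal in `α`. -/
def IsLadderOn (S : Set Ordinal) (x : Ordinal → ℕ → Ordinal) : Prop :=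
  ∀ α ∈ S, α < ω1 ∧ Order.IsSuccLimit α ∧ StrictMono (x α) ∧ (∀ n : ℕ, x α n < α) ∧
    ∀ β < α, ∃ n : ℕ, β < x α n

/-- The lexicographic order associated to a ladder system: `α <lex β` iff at the least `n`
where `x α` and `x β` differ we have `x α n < x β n`. -/
def LexLt (x : Ordinal → ℕ → Ordinal) (α β : Ordinal) : Prop :=
  ∃ n : ℕ, (∀ m < n, x α m = x β m) ∧ x α n < x β n

universe u v

lemma omega1_isLimit : Order.IsSuccLimit ω1 := Cardinal.isSuccLimit_ord (Cardinal.aleph0_le_aleph 1)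

lemma countable_Iic {o : Ordinal.{u}} (ho : o < ω1) : (Set.Iic o).Countable := by
  have h1 : (Set.Iio (o+1)).Countable := by
    rw [Cardinal.countable_iff_lt_aleph_one, Ordinal.mk_Iio_ordinal]
    rw [Cardinal.lift_lt_aleph_one, ← Cardinal.lt_ord]
    rw [Ordinal.add_one_eq_succ]
    exact omega1_isLimit.succ_lt ho
  exact h1.mono fun a ha => by
    simpa [Order.lt_add_one_iff] using ha

lemma not_countable_Iio_omega1 : ¬ (Set.Iio ω1).Countable := by
  rw [Cardinal.countable_iff_lt_aleph_one, Ordinal.mk_Iio_ordinal]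
  simp [ω1, Cardinal.card_ord]

/-- every countable set of ordinals below ω1 is bounded strictly below ω1 -/
lemma bdd_of_countable {A : Set Ordinal.{u}} (hA : A.Countable) (h : ∀ a ∈ A, a < ω1) :
    ∃ δ, δ < ω1 ∧ ∀ a ∈ A, a ≤ δ := by
  by_contra hc
  push_neg at hc
  apply not_countable_Iio_omega1
  have hsub : Set.Iio ω1 ⊆ ⋃ a ∈ A, Set.Iic a := by
    intro δ hδ
    obtain ⟨a, ha, hδa⟩ := hc δ hδ
    exact Set.mem_biUnion ha hδa.le
  exact (hA.biUnion fun a ha => countable_Iic (h a ha)).mono hsub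

def BGood (x : Ordinal.{u} → ℕ → Ordinal.{u}) (A : Set Ordinal.{u}) (n : ℕ) : Prop :=
  ∀ γ < ω1, ¬ ({β | β ∈ A ∧ γ < x β n}).Countable

open Classical in
noncomputable def BSet (x : Ordinal.{u} → ℕ → Ordinal.{u}) (T : Set Ordinal.{u}) : ℕ → Set Ordinal.{u}
  | 0 => T
  | n+1 =>
    if h : ∃ γ, γ < ω1 ∧ ({β | β ∈ BSet x T n ∧ γ < x β n}).Countable
    then {β | β ∈ BSet x T n ∧ x β n ≤ h.choose} else BSet x T n

lemma BSet_subset (x : Ordinal.{u} → ℕ → Ordinal.{u}) (T : Set Ordinal.{u}) :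
    ∀ n, BSet x T n ⊆ T := by
  intro n
  induction n with
  | zero => exact fun _ h => h
  | succ n ih =>
    intro β hβ
    apply ih
    unfold BSet at hβ
    split at hβ
    · exact hβ.1
    · exact hβ

lemma BSet_succ_subset (x : Ordinal.{u} → ℕ → Ordinal.{u}) (T : Set Ordinal.{u}) (n : ℕ) :
    BSet x T (n+1) ⊆ BSet x T n := by
  classical
  show (if h : ∃ γ, γ < ω1 ∧ ({β | β ∈ BSet x T n ∧ γ < x β n}).Countable
    then {β | β ∈ BSet x T n ∧ x β n ≤ h.choose} else BSet x T n) ⊆ BSet x T n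
  split
  · exact fun β hβ => hβ.1
  · exact subset_rfl

lemma BSet_anti (x : Ordinal.{u} → ℕ → Ordinal.{u}) (T : Set Ordinal.{u}) {m n : ℕ} (h : m ≤ n) :
    BSet x T n ⊆ BSet x T m := by
  induction n with
  | zero => cases Nat.eq_zero_of_le_zero h; exact subset_rfl
  | succ n ih =>
    rcases Nat.lt_or_ge m (n+1) with h' | h'
    · exact (BSet_succ_subset x T n).trans (ih (Nat.lt_succ_iff.mp h'))
    · cases le_antisymm h h'; exact subset_rfl

lemma BSet_succ_of_bad {x : Ordinal.{u} → ℕ → Ordinal.{u}} {T : Set Ordinal.{u}} {n : ℕ}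
    (h : ∃ γ, γ < ω1 ∧ ({β | β ∈ BSet x T n ∧ γ < x β n}).Countable) :
    BSet x T (n+1) = {β | β ∈ BSet x T n ∧ x β n ≤ h.choose} := by
  classical
  show (if h : ∃ γ, γ < ω1 ∧ ({β | β ∈ BSet x T n ∧ γ < x β n}).Countable
    then {β | β ∈ BSet x T n ∧ x β n ≤ h.choose} else BSet x T n) = _
  rw [dif_pos h]

lemma phase1 {S T : Set Ordinal.{u}} {x : Ordinal.{u} → ℕ → Ordinal.{u}}
    (hx : IsLadderOn S x) (hTS : T ⊆ S) (hT : ¬ T.Countable) :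
    ∃ n δ, δ < ω1 ∧ BGood x (BSet x T n) n ∧
      ∀ β ∈ BSet x T n, ∀ m, m < n → x β m ≤ δ := by
  classical
  set g : ℕ → Ordinal := fun m =>
    if h : ∃ γ, γ < ω1 ∧ ({β | β ∈ BSet x T m ∧ γ < x β m}).Countable
    then h.choose else 0 with hgdef
  have hgeq : ∀ m (h : ∃ γ, γ < ω1 ∧ ({β | β ∈ BSet x T m ∧ γ < x β m}).Countable),
      g m = h.choose := fun m h => dif_pos h
  have hglt : ∀ m, g m < ω1 := by
    intro m
    rw [hgdef]
    dsimp only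
    split
    · next h => exact h.choose_spec.1
    · exact omega1_isLimit.pos
  have hsucc : ∀ m (h : ∃ γ, γ < ω1 ∧ ({β | β ∈ BSet x T m ∧ γ < x β m}).Countable),
      BSet x T (m+1) = {β | β ∈ BSet x T m ∧ x β m ≤ g m} := by
    intro m h
    rw [BSet_succ_of_bad h, hgeq m h]
  have hcntset : ∀ m (h : ∃ γ, γ < ω1 ∧ ({β | β ∈ BSet x T m ∧ γ < x β m}).Countable),
      ({β | β ∈ BSet x T m ∧ g m < x β m}).Countable := by
    intro m h
    rw [hgeq m h]
    exact h.choose_spec.2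
  by_cases hgood : ∃ n, BGood x (BSet x T n) n
  · set n := Nat.find hgood with hn
    have hbad : ∀ m, m < n → ∃ γ, γ < ω1 ∧
        ({β | β ∈ BSet x T m ∧ γ < x β m}).Countable := by
      intro m hm
      have := Nat.find_min hgood hm
      unfold BGood at this
      push_neg at this
      exact this
    refine ⟨n, (Finset.range n).sup g, ?_, Nat.find_spec hgood, ?_⟩
    · rw [Finset.sup_lt_iff omega1_isLimit.pos]
      exact fun m _ => hglt m
    · intro β hβ m hm
      have hβ' : β ∈ BSet x T (m+1) := BSet_anti x T (Nat.succ_le_of_lt hm) hβ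
      rw [hsucc m (hbad m hm)] at hβ'
      exact hβ'.2.trans (Finset.le_sup (Finset.mem_range.mpr hm))
  · exfalso
    push_neg at hgood
    have hbad : ∀ m, ∃ γ, γ < ω1 ∧
        ({β | β ∈ BSet x T m ∧ γ < x β m}).Countable := by
      intro m
      have := hgood m
      unfold BGood at this
      push_neg at this
      exact this
    obtain ⟨δ, hδ1, hδ2⟩ := bdd_of_countable (Set.countable_range g)
      (by rintro a ⟨m, rfl⟩; exact hglt m)
    apply hT
    have cover : T ⊆ (⋃ m, {β | β ∈ BSet x T m ∧ g m < x β m}) ∪ Set.Iic δ := by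
      intro β hβ
      by_cases hall : ∀ m, β ∈ BSet x T (m+1)
      · right
        have hxb : ∀ m, x β m ≤ g m := by
          intro m
          have := hall m
          rw [hsucc m (hbad m)] at this
          exact this.2
        obtain ⟨-, -, -, -, hcof⟩ := hx β (hTS hβ)
        by_contra hle
        obtain ⟨m, hm⟩ := hcof δ (not_le.mp hle)
        exact absurd ((hxb m).trans (hδ2 _ ⟨m, rfl⟩)) (not_le.mpr hm)
      · left
        push_neg at hall
        have hex : ∃ m, β ∉ BSet x T (m+1) := hall
        set m := Nat.find hex with hm
        have h1 : β ∈ BSet x T m := by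
          rcases Nat.eq_zero_or_pos m with h0 | h0
          · rw [h0]; exact hβ
          · obtain ⟨k, hk⟩ := Nat.exists_eq_succ_of_ne_zero h0.ne'
            have hkm : k < Nat.find hex := by omega
            have := Nat.find_min hex hkm
            rw [hk]
            exact not_not.mp this
        have h2 : β ∉ BSet x T (m+1) := Nat.find_spec hex
        rw [hsucc m (hbad m)] at h2
        have : g m < x β m := by
          by_contra hc
          exact h2 ⟨h1, not_lt.mp hc⟩
        exact Set.mem_iUnion.mpr ⟨m, h1, this⟩
    exact ((Set.countable_iUnion fun m => hcntset m (hbad m)).union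
      (countable_Iic hδ1)).mono cover

lemma phase2 {S : Set Ordinal.{u}} {x : Ordinal.{u} → ℕ → Ordinal.{u}}
    (hx : IsLadderOn S x) {A : Set Ordinal.{u}} (hAS : A ⊆ S)
    {n : ℕ} {δ : Ordinal.{u}} (hδ : δ < ω1) (hbound : ∀ β ∈ A, ∀ m, m < n → x β m ≤ δ)
    (hgood : BGood x A n) :
    ∃ t : ℕ → Ordinal, BGood x {β | β ∈ A ∧ ∀ m, m < n → x β m = t m} n := by
  classical
  by_contra hc
  push_neg at hc
  have hc' : ∀ t : ℕ → Ordinal, ∃ γ, γ < ω1 ∧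
      ({β | β ∈ {β | β ∈ A ∧ ∀ m, m < n → x β m = t m} ∧ γ < x β n}).Countable := by
    intro t
    have := hc t
    unfold BGood at this
    push_neg at this
    exact this
  set c : (ℕ → Ordinal.{u}) → Ordinal := fun t => (hc' t).choose with hcdef
  set tup : Ordinal → (ℕ → Ordinal.{u}) := fun β m => if m < n then x β m else 0 with htupdef
  set R : Set (ℕ → Ordinal.{u}) := tup '' A with hRdef
  have hRcnt : R.Countable := by
    haveI : Countable (Set.Iic δ) := (countable_Iic hδ).to_subtype
    have hsub : R ⊆ Set.range (fun (v : Fin n → Set.Iic δ) (m : ℕ) =>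
        if h : m < n then (v ⟨m, h⟩ : Ordinal.{u}) else 0) := by
      rintro _ ⟨β, hβ, rfl⟩
      refine ⟨fun i => ⟨x β i, hbound β hβ i i.2⟩, funext fun m => ?_⟩
      by_cases h : m < n <;> simp [htupdef, h]
    exact (Set.countable_range _).mono hsub
  obtain ⟨γ0, hγ1, hγ2⟩ := bdd_of_countable (hRcnt.image c)
    (by rintro a ⟨t, ht, rfl⟩; exact (hc' t).choose_spec.1)
  apply hgood γ0 hγ1
  have cover : {β | β ∈ A ∧ γ0 < x β n} ⊆
      ⋃ t ∈ R, {β | β ∈ {β | β ∈ A ∧ ∀ m, m < n → x β m = t m} ∧ c t < x β n} := by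
    rintro β ⟨hβA, hβγ⟩
    refine Set.mem_biUnion (Set.mem_image_of_mem tup hβA) ?_
    refine ⟨⟨hβA, fun m hm => ?_⟩, ?_⟩
    · simp [htupdef, hm]
    · exact lt_of_le_of_lt (hγ2 _ (Set.mem_image_of_mem c (Set.mem_image_of_mem tup hβA))) hβγ
  exact (hRcnt.biUnion fun t _ => (hc' t).choose_spec.2).mono cover

open Classical in
noncomputable def bchain (x : Ordinal.{u} → ℕ → Ordinal.{u}) (T' : Set Ordinal.{u}) (n : ℕ) :
    Ordinal.{v} → Ordinal.{u} :=
  WellFounded.fix Ordinal.lt_wf (fun η ih =>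
    if h : ∃ β, β ∈ T' ∧ ∀ ξ : Set.Iio η, ih ξ ξ.2 < x β n then h.choose else 0)

open Classical in
lemma bchain_eq (x : Ordinal.{u} → ℕ → Ordinal.{u}) (T' : Set Ordinal.{u}) (n : ℕ) (η : Ordinal.{v}) :
    bchain x T' n η =
      if h : ∃ β, β ∈ T' ∧ ∀ ξ : Set.Iio η, bchain x T' n ξ < x β n then h.choose else 0 := by
  classical
  unfold bchain
  exact WellFounded.fix_eq _ _ _

lemma bchain_spec {S T' : Set Ordinal.{u}} {x : Ordinal.{u} → ℕ → Ordinal.{u}}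
    (hx : IsLadderOn S x) (hT'S : T' ⊆ S) {n : ℕ}
    (hgood : BGood x T' n) : ∀ η : Ordinal.{v}, η < ω1 →
      bchain x T' n η ∈ T' ∧ ∀ ξ, ξ < η → bchain x T' n ξ < x (bchain x T' n η) n := by
  intro η
  induction η using Ordinal.induction with
  | h η IH =>
  intro hη
  have hex : ∃ β, β ∈ T' ∧ ∀ ξ : Set.Iio η, bchain x T' n ξ < x β n := by
    have hcnt : (Set.range fun ξ : Set.Iio η => bchain x T' n ξ).Countable := by
      haveI : Countable (Set.Iio η) :=
        (((countable_Iic hη).mono Set.Iio_subset_Iic_self)).to_subtype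
      exact Set.countable_range _
    obtain ⟨δ, hδ1, hδ2⟩ := bdd_of_countable hcnt
      (by
        rintro a ⟨ξ, rfl⟩
        exact (hx _ (hT'S (IH ξ ξ.2 (ξ.2.trans hη)).1)).1)
    have hne : {β | β ∈ T' ∧ δ < x β n}.Nonempty := by
      rcases Set.eq_empty_or_nonempty {β | β ∈ T' ∧ δ < x β n} with h | h
      · exact absurd (h ▸ Set.countable_empty) (hgood δ hδ1)
      · exact h
    obtain ⟨β, hβT, hβδ⟩ := hne
    exact ⟨β, hβT, fun ξ => lt_of_le_of_lt (hδ2 _ ⟨ξ, rfl⟩) hβδ⟩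
  rw [bchain_eq x T' n η, dif_pos hex]
  exact ⟨hex.choose_spec.1, fun ξ hξ => hex.choose_spec.2 ⟨ξ, hξ⟩⟩


/-- Every uncountable subset of a Baumgartner type contains a copy of `ω₁`. -/
theorem baumgartner_contains_omega1 (S : Set Ordinal) (x : Ordinal → ℕ → Ordinal)
    (hS : ¬ S.Countable) (hx : IsLadderOn S x)
    (T : Set Ordinal) (hTS : T ⊆ S) (hT : ¬ T.Countable) :
    ∃ f : Ordinal → Ordinal, (∀ ξ < ω1, f ξ ∈ T) ∧
      ∀ ξ η : Ordinal, ξ < ω1 → η < ω1 → ξ < η → LexLt x (f ξ) (f η) := by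
  obtain ⟨n, δ, hδ, hgood, hbound⟩ := phase1 hx hTS hT
  have hAS : BSet x T n ⊆ S := (BSet_subset x T n).trans hTS
  obtain ⟨t, hgood'⟩ := phase2 hx hAS hδ hbound hgood
  set T' : Set Ordinal := {β | β ∈ BSet x T n ∧ ∀ m, m < n → x β m = t m} with hT'def
  have hT'S : T' ⊆ S := fun β hβ => hAS hβ.1
  have spec := bchain_spec hx hT'S hgood'
  refine ⟨bchain x T' n, fun ξ hξ => BSet_subset x T n ((spec ξ hξ).1).1, ?_⟩
  intro ξ η hξ hη hlt
  refine ⟨n, fun m hm => ?_, ?_⟩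
  · rw [((spec ξ hξ).1).2 m hm, ((spec η hη).1).2 m hm]
  · have hlt1 : bchain x T' n ξ < x (bchain x T' n η) n := (spec η hη).2 ξ hlt
    have hlt2 : x (bchain x T' n ξ) n < bchain x T' n ξ :=
      (hx _ (hT'S (spec ξ hξ).1)).2.2.2.1 n
    exact hlt2.trans hlt1
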